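/- arXiv:2508.17698 — 2 statements merged into one kernel-verified Lean document; each statement's English description precedes it below -/
import Mathlib

section
/- Let a ∈ Ω be nonneutral. For all z, w ∈ Ω_a (i.e. z, w ∈ Ω with ⟨z,a⟩_K ≠ 1 and ⟨w,a⟩_K ≠ 1), one has 1 − ⟨φ_a(z), w⟩_K = ((1 − ⟨a,w⟩_K)/(1 − ⟨z,a⟩_K))·(1 − ⟨z, φ_a(w)⟩_K). -/
open Complex ComplexConjugate ComplexOrder

/-- The indefinite inner product `⟨z,w⟩_K = z₁·conj(w₁) − z₂·conj(w₂)` on ℂ². -/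
noncomputable def Kip (z w : Fin 2 → ℂ) : ℂ :=
  z 0 * conj (w 0) - z 1 * conj (w 1)

/-- The unit ball `Ω = {z : |z₁|² − |z₂|² < 1}` of the Kreĭn space `(ℂ², ⟨·,·⟩_K)`. -/
def Omega : Set (Fin 2 → ℂ) :=
  {z | ‖z 0‖ ^ 2 - ‖z 1‖ ^ 2 < 1}

/-- The birational involution `φ_a(z) = (a − P_a z − s_a Q_a z)/(1 − ⟨z,a⟩_K)`,
with the convention `φ_0(z) = −z`.  Here `P_a z = (⟨z,a⟩_K/⟨a,a⟩_K)a`,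
`Q_a = I − P_a` and `s_a = (1 − ⟨a,a⟩_K)^{1/2}` (note `⟨a,a⟩_K` is real). -/
noncomputable def phiK (a z : Fin 2 → ℂ) : Fin 2 → ℂ :=
  if a = 0 then -z
  else
    (1 - Kip z a)⁻¹ •
      (a - (Kip z a / Kip a a) • a
        - (Real.sqrt (1 - (Kip a a).re) : ℂ) • (z - (Kip z a / Kip a a) • a))

lemma Kip_smul_left (c : ℂ) (v w : Fin 2 → ℂ) : Kip (c • v) w = c * Kip v w := by
  simp [Kip]; ring

lemma Kip_sub_left (u v w : Fin 2 → ℂ) : Kip (u - v) w = Kip u w - Kip v w := by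
  simp [Kip]; ring

lemma Kip_smul_right (c : ℂ) (v w : Fin 2 → ℂ) : Kip w (c • v) = conj c * Kip w v := by
  simp [Kip]; ring

lemma Kip_sub_right (u v w : Fin 2 → ℂ) : Kip w (u - v) = Kip w u - Kip w v := by
  simp [Kip]; ring

lemma Kip_conj (u v : Fin 2 → ℂ) : conj (Kip u v) = Kip v u := by
  simp [Kip, map_sub, map_mul]; ring

/-- `1 − ⟨φ_a(z), w⟩_K = ((1 − ⟨a,w⟩_K)/(1 − ⟨z,a⟩_K))·(1 − ⟨z, φ_a(w)⟩_K)`. -/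
theorem one_sub_Kip_phiK_mixed (a : Fin 2 → ℂ) (haO : a ∈ Omega) (ha : Kip a a ≠ 0)
    (z w : Fin 2 → ℂ) (hzO : z ∈ Omega) (hwO : w ∈ Omega)
    (hz : Kip z a ≠ 1) (hw : Kip w a ≠ 1) :
    1 - Kip (phiK a z) w = (1 - Kip a w) / (1 - Kip z a) * (1 - Kip z (phiK a w)) := by
  have ha0 : a ≠ 0 := by
    intro h; apply ha; simp [Kip, h]
  have hz' : (1 : ℂ) - Kip z a ≠ 0 := sub_ne_zero.mpr (fun h => hz h.symm)
  have hw' : (1 : ℂ) - Kip w a ≠ 0 := sub_ne_zero.mpr (fun h => hw h.symm)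
  have hconj : Kip a w = conj (Kip w a) := (Kip_conj w a).symm
  have hw'' : (1 : ℂ) - Kip a w ≠ 0 := by
    rw [hconj, ← map_one (starRingEnd ℂ), ← map_sub, map_ne_zero]
    exact hw'
  rw [phiK, phiK, if_neg ha0, if_neg ha0]
  rw [Kip_smul_left, Kip_sub_left, Kip_sub_left, Kip_smul_left, Kip_smul_left,
    Kip_sub_left, Kip_smul_left]
  rw [Kip_smul_right, Kip_sub_right, Kip_sub_right, Kip_smul_right, Kip_smul_right,
    Kip_sub_right, Kip_smul_right]
  simp only [map_inv₀, map_sub, map_one, map_div₀, Kip_conj, Complex.conj_ofReal]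
  field_simp
  ring
end

section
/- Let λ₁ and λ₂ be two distinct points of 𝔻 and let ω₁, ω₂ ∈ 𝔻. The following are equivalent: (i) the matrix M_Φ(λ₁,λ₂;ω₁,ω₂) with entries (1−ω_i·conj(ω_j))²/(1−λ_i·conj(λ_j))² is positive semi-definite; (ii) the Pick matrix P(λ₁,λ₂;ω₁,ω₂) with entries (1−ω_i·conj(ω_j))/(1−λ_i·conj(λ_j)) is positive semi-definite; (iii) ρ(ω₁,ω₂) ≤ ρ(λ₁,λ₂). -/
open Complex ComplexConjugate ComplexOrder

/-- The distance on the unit disk induced by the Bergman kernel. -/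
noncomputable def rho (l m : ℂ) : ℝ :=
  Real.sqrt (2 * ‖(l - m) / (1 - conj m * l)‖ ^ 2
    - ‖(l - m) / (1 - conj m * l)‖ ^ 4)

lemma psd_two (M : Matrix (Fin 2) (Fin 2) ℂ) (a c : ℝ) (b : ℂ)
    (h00 : M 0 0 = (a : ℂ)) (h01 : M 0 1 = b) (h10 : M 1 0 = conj b)
    (h11 : M 1 1 = (c : ℂ)) (ha : 0 < a) :
    M.PosSemidef ↔ Complex.normSq b ≤ a * c := by
  rw [Matrix.posSemidef_iff_dotProduct_mulVec]
  constructor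
  · rintro ⟨_, hq⟩
    have := hq ![-b, (a : ℂ)]
    simp only [Matrix.mulVec, dotProduct, Fin.sum_univ_two, Matrix.cons_val_zero,
      Matrix.cons_val_one, Matrix.head_cons, Pi.star_apply, RCLike.star_def,
      h00, h01, h10, h11] at this
    have hre : (0:ℝ) ≤ (conj (-b) * ((a:ℂ) * -b + b * a) + conj (a:ℂ) * (conj b * -b + (c:ℂ) * a)).re :=
      (Complex.le_def.mp this).1
    have hb : conj b * b = (Complex.normSq b : ℂ) := by
      rw [mul_comm, Complex.mul_conj]
    have heq : conj (-b) * ((a:ℂ) * -b + b * a) + conj (a:ℂ) * (conj b * -b + (c:ℂ) * a)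
        = ((a * (a * c - Complex.normSq b) : ℝ) : ℂ) := by
      rw [Complex.conj_ofReal]
      push_cast
      rw [← hb]; ring
    rw [heq, Complex.ofReal_re] at hre
    nlinarith
  · intro hd
    have hherm : M.IsHermitian := by
      ext i j
      fin_cases i <;> fin_cases j <;>
        simp [Matrix.conjTranspose_apply, h00, h01, h10, h11, Complex.conj_ofReal]
    refine ⟨hherm, fun x => ?_⟩
    simp only [Matrix.mulVec, dotProduct, Fin.sum_univ_two, Pi.star_apply,
      RCLike.star_def, h00, h01, h10, h11]
    set Q := conj (x 0) * ((a:ℂ) * x 0 + b * x 1) + conj (x 1) * (conj b * x 0 + (c:ℂ) * x 1) with hQ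
    have key : (a : ℂ) * Q = ((Complex.normSq ((a:ℂ) * x 0 + b * x 1)
        + (a * c - Complex.normSq b) * Complex.normSq (x 1) : ℝ) : ℂ) := by
      push_cast
      rw [← Complex.mul_conj, ← Complex.mul_conj, ← Complex.mul_conj]
      simp only [map_add, map_mul, Complex.conj_ofReal]
      ring
    have hQr : Q = ((a⁻¹ * (Complex.normSq ((a:ℂ) * x 0 + b * x 1)
        + (a * c - Complex.normSq b) * Complex.normSq (x 1)) : ℝ) : ℂ) := by
      have ha' : (a : ℂ) ≠ 0 := by exact_mod_cast ha.ne'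
      have h2 : Q = (a:ℂ)⁻¹ * ((a:ℂ) * Q) := by field_simp
      rw [h2, key]; push_cast; ring
    rw [hQr]
    rw [Complex.zero_le_real]
    have h1 : 0 ≤ a * c - Complex.normSq b := by linarith
    have h2 : (0:ℝ) ≤ a⁻¹ := inv_nonneg.mpr ha.le
    apply mul_nonneg h2
    exact add_nonneg (Complex.normSq_nonneg _) (mul_nonneg h1 (Complex.normSq_nonneg _))

lemma normSq_one_sub_mul_conj (a b : ℂ) :
    Complex.normSq (1 - a * conj b)
      = (1 - Complex.normSq a) * (1 - Complex.normSq b) + Complex.normSq (a - b) := by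
  have h : ((Complex.normSq (1 - a * conj b) : ℝ) : ℂ)
      = (((1 - Complex.normSq a) * (1 - Complex.normSq b) + Complex.normSq (a - b) : ℝ) : ℂ) := by
    push_cast
    rw [← Complex.mul_conj, ← Complex.mul_conj, ← Complex.mul_conj, ← Complex.mul_conj]
    simp only [map_sub, map_one, map_mul, Complex.conj_conj]
    ring
  exact_mod_cast h

lemma rho_bridge (AB CD Nw Nl Nu Nv : ℝ) (hAB : 0 < AB) (hCD : 0 < CD)
    (hNw : 0 ≤ Nw) (hNl : 0 < Nl) (hNu : Nu = AB + Nw) (hNv : Nv = CD + Nl) :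
    (Nu / Nv ≤ AB / CD ↔
      Real.sqrt (2 * (Nw / Nu) - (Nw / Nu) ^ 2)
        ≤ Real.sqrt (2 * (Nl / Nv) - (Nl / Nv) ^ 2)) := by
  subst hNu hNv
  have hNu' : 0 < AB + Nw := by linarith
  have hNv' : 0 < CD + Nl := by linarith
  have hq0 : 0 ≤ Nw / (AB + Nw) := div_nonneg hNw hNu'.le
  have hq1 : Nw / (AB + Nw) < 1 := (div_lt_one hNu').mpr (by linarith)
  have hp0 : 0 ≤ Nl / (CD + Nl) := div_nonneg hNl.le hNv'.le
  have hp1 : Nl / (CD + Nl) < 1 := (div_lt_one hNv').mpr (by linarith)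
  set q := Nw / (AB + Nw) with hq
  set p := Nl / (CD + Nl) with hp
  have h1 : (AB + Nw) / (CD + Nl) ≤ AB / CD ↔ q ≤ p := by
    rw [div_le_div_iff₀ hNv' hCD, hq, hp, div_le_div_iff₀ hNu' hNv']
    constructor <;> intro h <;> nlinarith
  rw [h1, Real.sqrt_le_sqrt_iff (by nlinarith)]
  constructor <;> intro h
  · by_contra hc
    push_neg at hc
    nlinarith [mul_pos (sub_pos.mpr hc) (by linarith : (0:ℝ) < 2 - p - q)]
  · nlinarith [mul_nonneg (sub_nonneg.mpr h) (by linarith : (0:ℝ) ≤ 2 - p - q)]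

/-- Equivalence of: positivity of `M_Φ(λ₁,λ₂;ω₁,ω₂)`, positivity of the Pick
matrix `P(λ₁,λ₂;ω₁,ω₂)`, and the distance inequality `ρ(ω₁,ω₂) ≤ ρ(λ₁,λ₂)`. -/
theorem MPhi_pick_rho_equiv (l1 l2 w1 w2 : ℂ)
    (hl1 : ‖l1‖ < 1) (hl2 : ‖l2‖ < 1) (hne : l1 ≠ l2)
    (hw1 : ‖w1‖ < 1) (hw2 : ‖w2‖ < 1) :
    ((Matrix.of fun i j : Fin 2 =>
        (1 - ![w1, w2] i * conj (![w1, w2] j)) ^ 2 /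
          (1 - ![l1, l2] i * conj (![l1, l2] j)) ^ 2).PosSemidef
      ↔ (Matrix.of fun i j : Fin 2 =>
          (1 - ![w1, w2] i * conj (![w1, w2] j)) /
            (1 - ![l1, l2] i * conj (![l1, l2] j))).PosSemidef)
    ∧ ((Matrix.of fun i j : Fin 2 =>
          (1 - ![w1, w2] i * conj (![w1, w2] j)) /
            (1 - ![l1, l2] i * conj (![l1, l2] j))).PosSemidef
      ↔ rho w1 w2 ≤ rho l1 l2) := by
  have hA : 0 < 1 - Complex.normSq w1 := by
    have := Complex.sq_norm w1; nlinarith [norm_nonneg w1]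
  have hB : 0 < 1 - Complex.normSq w2 := by
    have := Complex.sq_norm w2; nlinarith [norm_nonneg w2]
  have hC : 0 < 1 - Complex.normSq l1 := by
    have := Complex.sq_norm l1; nlinarith [norm_nonneg l1]
  have hD : 0 < 1 - Complex.normSq l2 := by
    have := Complex.sq_norm l2; nlinarith [norm_nonneg l2]
  have hNl : 0 < Complex.normSq (l1 - l2) :=
    Complex.normSq_pos.mpr (sub_ne_zero.mpr hne)
  have hNw : 0 ≤ Complex.normSq (w1 - w2) := Complex.normSq_nonneg _
  have hNu : Complex.normSq (1 - w1 * conj w2)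
      = (1 - Complex.normSq w1) * (1 - Complex.normSq w2) + Complex.normSq (w1 - w2) :=
    normSq_one_sub_mul_conj w1 w2
  have hNv : Complex.normSq (1 - l1 * conj l2)
      = (1 - Complex.normSq l1) * (1 - Complex.normSq l2) + Complex.normSq (l1 - l2) :=
    normSq_one_sub_mul_conj l1 l2
  -- Pick matrix characterization
  have hP := psd_two
    (Matrix.of fun i j : Fin 2 =>
      (1 - ![w1, w2] i * conj (![w1, w2] j)) / (1 - ![l1, l2] i * conj (![l1, l2] j)))
    ((1 - Complex.normSq w1) / (1 - Complex.normSq l1))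
    ((1 - Complex.normSq w2) / (1 - Complex.normSq l2))
    ((1 - w1 * conj w2) / (1 - l1 * conj l2))
    (by simp only [Matrix.of_apply, Matrix.cons_val_zero]
        rw [Complex.mul_conj, Complex.mul_conj]; push_cast; ring)
    (by simp only [Matrix.of_apply, Matrix.cons_val_zero, Matrix.cons_val_one, Matrix.head_cons])
    (by simp only [Matrix.of_apply, Matrix.cons_val_zero, Matrix.cons_val_one, Matrix.head_cons,
          map_div₀, map_sub, map_one, map_mul, Complex.conj_conj]
        ring)
    (by simp only [Matrix.of_apply, Matrix.cons_val_one, Matrix.head_cons]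
        rw [Complex.mul_conj, Complex.mul_conj]; push_cast; ring)
    (div_pos hA hC)
  -- MPhi characterization
  have hM := psd_two
    (Matrix.of fun i j : Fin 2 =>
      (1 - ![w1, w2] i * conj (![w1, w2] j)) ^ 2 / (1 - ![l1, l2] i * conj (![l1, l2] j)) ^ 2)
    (((1 - Complex.normSq w1) / (1 - Complex.normSq l1)) ^ 2)
    (((1 - Complex.normSq w2) / (1 - Complex.normSq l2)) ^ 2)
    (((1 - w1 * conj w2) / (1 - l1 * conj l2)) ^ 2)
    (by simp only [Matrix.of_apply, Matrix.cons_val_zero]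
        rw [Complex.mul_conj, Complex.mul_conj]; push_cast; rw [div_pow])
    (by simp only [Matrix.of_apply, Matrix.cons_val_zero, Matrix.cons_val_one, Matrix.head_cons]
        rw [div_pow])
    (by simp only [Matrix.of_apply, Matrix.cons_val_zero, Matrix.cons_val_one, Matrix.head_cons,
          map_pow, map_div₀, map_sub, map_one, map_mul, Complex.conj_conj, div_pow]
        congr 1 <;> ring)
    (by simp only [Matrix.of_apply, Matrix.cons_val_one, Matrix.head_cons]
        rw [Complex.mul_conj, Complex.mul_conj]; push_cast; rw [div_pow])
    (pow_pos (div_pos hA hC) 2)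
  have hnb : Complex.normSq ((1 - w1 * conj w2) / (1 - l1 * conj l2))
      = Complex.normSq (1 - w1 * conj w2) / Complex.normSq (1 - l1 * conj l2) :=
    map_div₀ Complex.normSq _ _
  have hacpos : 0 < (1 - Complex.normSq w1) / (1 - Complex.normSq l1)
      * ((1 - Complex.normSq w2) / (1 - Complex.normSq l2)) :=
    mul_pos (div_pos hA hC) (div_pos hB hD)
  have link1 : Complex.normSq (((1 - w1 * conj w2) / (1 - l1 * conj l2)) ^ 2)
      ≤ ((1 - Complex.normSq w1) / (1 - Complex.normSq l1)) ^ 2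
        * ((1 - Complex.normSq w2) / (1 - Complex.normSq l2)) ^ 2
      ↔ Complex.normSq ((1 - w1 * conj w2) / (1 - l1 * conj l2))
      ≤ (1 - Complex.normSq w1) / (1 - Complex.normSq l1)
        * ((1 - Complex.normSq w2) / (1 - Complex.normSq l2)) := by
    rw [map_pow]
    have h2 : 0 ≤ Complex.normSq ((1 - w1 * conj w2) / (1 - l1 * conj l2)) :=
      Complex.normSq_nonneg _
    constructor <;> intro h <;> nlinarith
  -- identify rho with the sqrt expressions
  have habsw : ‖(w1 - w2) / (1 - conj w2 * w1)‖ ^ 2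
      = Complex.normSq (w1 - w2) / Complex.normSq (1 - w1 * conj w2) := by
    rw [Complex.sq_norm, map_div₀, mul_comm (conj w2) w1]
  have habsl : ‖(l1 - l2) / (1 - conj l2 * l1)‖ ^ 2
      = Complex.normSq (l1 - l2) / Complex.normSq (1 - l1 * conj l2) := by
    rw [Complex.sq_norm, map_div₀, mul_comm (conj l2) l1]
  have hrw : rho w1 w2 = Real.sqrt
      (2 * (Complex.normSq (w1 - w2) / Complex.normSq (1 - w1 * conj w2))
        - (Complex.normSq (w1 - w2) / Complex.normSq (1 - w1 * conj w2)) ^ 2) := by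
    rw [rho, show (4:ℕ) = 2 * 2 from rfl, pow_mul, habsw]
  have hrl : rho l1 l2 = Real.sqrt
      (2 * (Complex.normSq (l1 - l2) / Complex.normSq (1 - l1 * conj l2))
        - (Complex.normSq (l1 - l2) / Complex.normSq (1 - l1 * conj l2)) ^ 2) := by
    rw [rho, show (4:ℕ) = 2 * 2 from rfl, pow_mul, habsl]
  have link2 : Complex.normSq ((1 - w1 * conj w2) / (1 - l1 * conj l2))
      ≤ (1 - Complex.normSq w1) / (1 - Complex.normSq l1)
        * ((1 - Complex.normSq w2) / (1 - Complex.normSq l2))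
      ↔ rho w1 w2 ≤ rho l1 l2 := by
    rw [hnb, hrw, hrl,
      show (1 - Complex.normSq w1) / (1 - Complex.normSq l1)
        * ((1 - Complex.normSq w2) / (1 - Complex.normSq l2))
        = (1 - Complex.normSq w1) * (1 - Complex.normSq w2)
          / ((1 - Complex.normSq l1) * (1 - Complex.normSq l2)) from div_mul_div_comm _ _ _ _]
    exact rho_bridge _ _ _ _ _ _ (mul_pos hA hB) (mul_pos hC hD) hNw hNl hNu hNv
  constructor
  · rw [hM, hP]; exact link1
  · rw [hP]; exact link2
end
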